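/- Let t ≥ 1 and let C_1, ..., C_t ⊆ F_q^n be linear codes of dimensions k_1, ..., k_t, all with full support, such that the product code C_1*...*C_t is nonzero. Then there exist codewords c_i ∈ C_i with 1 ≤ w(c_1*...*c_t) ≤ max(t-1, n + t - (k_1 + ... + k_t)), where w denotes Hamming weight. -/

import Mathlib

noncomputable section

/-- The componentwise product code of two linear codes. -/
def prodCode (F : Type*) [Field F] {n : ℕ}
    (C C' : Submodule F (Fin n → F)) : Submodule F (Fin n → F) :=
  Submodule.span F {z | ∃ c ∈ C, ∃ c' ∈ C', z = c * c'}

/-- The t-fold componentwise power of a code (convention: 0th power is ⊤). -/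
def powCode (F : Type*) [Field F] {n : ℕ} (C : Submodule F (Fin n → F)) :
    ℕ → Submodule F (Fin n → F)
  | 0 => ⊤
  | 1 => C
  | (t+2) => prodCode F (powCode F C (t+1)) C

/-- Minimum distance: minimum Hamming weight of a nonzero codeword. -/
def dmin {F : Type*} [Field F] [DecidableEq F] {n : ℕ}
    (C : Submodule F (Fin n → F)) : ℕ :=
  sInf {w | ∃ c ∈ C, c ≠ 0 ∧ hammingNorm c = w}

/-- The dual code with respect to the standard bilinear form. -/
def dualCode (F : Type*) [Field F] {n : ℕ}
    (C : Submodule F (Fin n → F)) : Submodule F (Fin n → F) where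
  carrier := {x | ∀ c ∈ C, ∑ i, x i * c i = 0}
  zero_mem' := by intro c hc; simp
  add_mem' := by
    intro a b ha hb c hc
    have h : ∑ i, (a + b) i * c i = (∑ i, a i * c i) + ∑ i, b i * c i := by
      simp [add_mul, Finset.sum_add_distrib]
    simp only [Set.mem_setOf_eq] at *
    rw [h, ha c hc, hb c hc, add_zero]
  smul_mem' := by
    intro r a ha c hc
    simp only [Pi.smul_apply, smul_eq_mul, mul_assoc, ← Finset.mul_sum, Set.mem_setOf_eq] at *
    rw [ha c hc, mul_zero]

/-- A code has full support if every coordinate carries a nonzero codeword value. -/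
def fullSupport (F : Type*) [Field F] {n : ℕ} (C : Submodule F (Fin n → F)) : Prop :=
  ∀ j, ∃ c ∈ C, c j ≠ 0

/-- Product code of a family of codes. -/
def prodFamily (F : Type*) [Field F] {n t : ℕ}
    (C : Fin t → Submodule F (Fin n → F)) : Submodule F (Fin n → F) :=
  Submodule.span F {z | ∃ c : Fin t → (Fin n → F), (∀ i, c i ∈ C i) ∧ z = ∏ i, c i}


namespace PSB
open Module Finset

variable {F : Type*} [Field F] {n : ℕ}

/-- Functions vanishing on every coordinate in `A`. -/
def zOn (F : Type*) [Field F] {n : ℕ} (A : Finset (Fin n)) : Submodule F (Fin n → F) where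
  carrier := {x | ∀ j ∈ A, x j = 0}
  add_mem' := by intro a b ha hb j hj; simp [Set.mem_setOf_eq] at *; simp [ha j hj, hb j hj]
  zero_mem' := by intro j _; rfl
  smul_mem' := by intro r a ha j hj; simp [Set.mem_setOf_eq] at *; simp [ha j hj]

lemma mem_zOn {A : Finset (Fin n)} {x : Fin n → F} : x ∈ zOn F A ↔ ∀ j ∈ A, x j = 0 := Iff.rfl

/-- Functions vanishing outside `S`. -/
def zOut (F : Type*) [Field F] {n : ℕ} (S : Finset (Fin n)) : Submodule F (Fin n → F) where
  carrier := {x | ∀ j, j ∉ S → x j = 0}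
  add_mem' := by intro a b ha hb j hj; simp [Set.mem_setOf_eq] at *; simp [ha j hj, hb j hj]
  zero_mem' := by intro j _; rfl
  smul_mem' := by intro r a ha j hj; simp [Set.mem_setOf_eq] at *; simp [ha j hj]

lemma mem_zOut {S : Finset (Fin n)} {x : Fin n → F} : x ∈ zOut F S ↔ ∀ j, j ∉ S → x j = 0 := Iff.rfl

/-- Restriction (projection) onto the coordinates in `S`. -/
def res (F : Type*) [Field F] {n : ℕ} (S : Finset (Fin n)) :
    (Fin n → F) →ₗ[F] (Fin n → F) where
  toFun x := fun j => if j ∈ S then x j else 0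
  map_add' := by intro a b; funext j; by_cases h : j ∈ S <;> simp [h]
  map_smul' := by intro r a; funext j; by_cases h : j ∈ S <;> simp [h]

lemma res_apply {S : Finset (Fin n)} (x : Fin n → F) (j : Fin n) :
    res F S x j = if j ∈ S then x j else 0 := rfl

lemma map_res_le_zOut (S : Finset (Fin n)) (W : Submodule F (Fin n → F)) :
    Submodule.map (res F S) W ≤ zOut F S := by
  rintro x ⟨y, hy, rfl⟩ j hj
  simp [res_apply, hj]

lemma zOn_empty : zOn F (∅ : Finset (Fin n)) = ⊤ := by
  ext x; simp [mem_zOn]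

lemma zOn_insert (a : Fin n) (A : Finset (Fin n)) :
    zOn F (insert a A) = LinearMap.ker (LinearMap.proj a) ⊓ zOn F A := by
  ext x
  simp only [mem_zOn, Submodule.mem_inf, LinearMap.mem_ker, LinearMap.proj_apply,
    Finset.mem_insert]
  constructor
  · intro h; exact ⟨h a (Or.inl rfl), fun j hj => h j (Or.inr hj)⟩
  · rintro ⟨h1, h2⟩ j (rfl | hj)
    · exact h1
    · exact h2 j hj

lemma finrank_inf_ker_add {M : Type*} [AddCommGroup M] [Module F M]
    (W : Submodule F (Fin n → F)) (φ : (Fin n → F) →ₗ[F] M) :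
    finrank F ↥(W ⊓ LinearMap.ker φ) + finrank F ↥(Submodule.map φ W) = finrank F ↥W := by
  have h := LinearMap.finrank_range_add_finrank_ker (φ.comp W.subtype)
  rw [LinearMap.range_comp, Submodule.range_subtype, LinearMap.ker_comp] at h
  have e : finrank F ↥(Submodule.comap W.subtype (LinearMap.ker φ))
      = finrank F ↥(W ⊓ LinearMap.ker φ) := by
    rw [← Submodule.map_comap_subtype]
    exact (Submodule.equivMapOfInjective _ (Submodule.injective_subtype W) _).finrank_eq
  omega

lemma finrank_le_inf_ker_add_one (W : Submodule F (Fin n → F)) (φ : (Fin n → F) →ₗ[F] F) :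
    finrank F ↥W ≤ finrank F ↥(W ⊓ LinearMap.ker φ) + 1 := by
  have h := finrank_inf_ker_add W φ
  have h2 : finrank F ↥(Submodule.map φ W) ≤ 1 := by
    simpa using Submodule.finrank_le (Submodule.map φ W)
  omega

lemma finrank_inf_ker_add_one (W : Submodule F (Fin n → F)) (φ : (Fin n → F) →ₗ[F] F)
    (h : ∃ c ∈ W, φ c ≠ 0) :
    finrank F ↥(W ⊓ LinearMap.ker φ) + 1 = finrank F ↥W := by
  have h1 := finrank_inf_ker_add W φ
  have h2 : finrank F ↥(Submodule.map φ W) ≤ 1 := by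
    simpa using Submodule.finrank_le (Submodule.map φ W)
  have h3 : finrank F ↥(Submodule.map φ W) ≠ 0 := by
    rw [Ne, Submodule.finrank_eq_zero]
    obtain ⟨c, hc, hc0⟩ := h
    exact (Submodule.ne_bot_iff _).2 ⟨φ c, Submodule.mem_map_of_mem hc, hc0⟩
  omega

lemma finrank_le_inf_zOn_add (W : Submodule F (Fin n → F)) (A : Finset (Fin n)) :
    finrank F ↥W ≤ finrank F ↥(W ⊓ zOn F A) + A.card := by
  classical
  induction A using Finset.induction_on with
  | empty =>
    have hEq : W ⊓ zOn F (∅ : Finset (Fin n)) = W := by rw [zOn_empty, inf_top_eq]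
    rw [hEq]
    simp
  | @insert a A ha IH =>
    have hEq : W ⊓ zOn F (insert a A) = (W ⊓ zOn F A) ⊓ LinearMap.ker (LinearMap.proj a) := by
      rw [zOn_insert]
      ext x
      simp only [Submodule.mem_inf]
      tauto
    have step := finrank_le_inf_ker_add_one (W ⊓ zOn F A) (LinearMap.proj a)
    rw [← hEq] at step
    rw [Finset.card_insert_of_notMem ha]
    omega

lemma exists_mem_ne_zero (W : Submodule F (Fin n → F)) (h : 1 ≤ finrank F ↥W) :
    ∃ x ∈ W, x ≠ 0 := by
  rw [← Submodule.ne_bot_iff]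
  intro hb
  rw [hb] at h
  simp [finrank_bot] at h

lemma finrank_le_card (W : Submodule F (Fin n → F)) (T : Finset (Fin n))
    (h : ∀ x ∈ W, (∀ j ∈ T, x j = 0) → x = 0) : finrank F ↥W ≤ T.card := by
  classical
  set μ : ↥W →ₗ[F] (↥T → F) :=
    LinearMap.pi (fun j : ↥T => (LinearMap.proj (j : Fin n)).comp W.subtype) with hμ
  have hinj : Function.Injective μ := by
    rw [← LinearMap.ker_eq_bot]
    rw [Submodule.eq_bot_iff]
    intro x hx
    rw [LinearMap.mem_ker] at hx
    have hx0 : (x : Fin n → F) = 0 := by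
      apply h x x.2
      intro j hj
      have := congrFun hx ⟨j, hj⟩
      simpa [hμ, LinearMap.pi_apply] using this
    exact Subtype.ext hx0
  have := LinearMap.finrank_le_finrank_of_injective hinj
  simpa [Module.finrank_pi, Fintype.card_coe] using this

lemma finrank_map_eq_of_inj (W : Submodule F (Fin n → F))
    (φ : (Fin n → F) →ₗ[F] (Fin n → F))
    (h : ∀ x ∈ W, φ x = 0 → x = 0) :
    finrank F ↥(Submodule.map φ W) = finrank F ↥W := by
  have h2 := finrank_inf_ker_add W φ
  have h3 : W ⊓ LinearMap.ker φ = ⊥ := by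
    rw [Submodule.eq_bot_iff]
    rintro x hx
    obtain ⟨hxW, hxk⟩ := Submodule.mem_inf.1 hx
    exact h x hxW hxk
  rw [h3] at h2
  simpa [finrank_bot] using h2

section Weights

variable [DecidableEq F]

lemma hn_eq (x : Fin n → F) :
    hammingNorm x = (Finset.univ.filter fun j => x j ≠ 0).card := rfl

lemma hn_le_card {x : Fin n → F} {T : Finset (Fin n)} (h : ∀ j, x j ≠ 0 → j ∈ T) :
    hammingNorm x ≤ T.card := by
  rw [hn_eq]
  apply Finset.card_le_card
  intro j hj
  exact h j (Finset.mem_filter.1 hj).2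

lemma hn_mono {x y : Fin n → F} (h : ∀ j, x j ≠ 0 → y j ≠ 0) :
    hammingNorm x ≤ hammingNorm y := by
  rw [hn_eq, hn_eq]
  apply Finset.card_le_card
  intro j hj
  exact Finset.mem_filter.2 ⟨Finset.mem_univ j, h j (Finset.mem_filter.1 hj).2⟩

lemma hn_le_insert {x y : Fin n → F} (j0 : Fin n) (h : ∀ j, x j ≠ 0 → y j ≠ 0 ∨ j = j0) :
    hammingNorm x ≤ hammingNorm y + 1 := by
  rw [hn_eq, hn_eq]
  have h1 : (Finset.univ.filter fun j => x j ≠ 0).card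
      ≤ (insert j0 (Finset.univ.filter fun j => y j ≠ 0)).card := by
    apply Finset.card_le_card
    intro j hj
    rcases h j (Finset.mem_filter.1 hj).2 with hc | hc
    · exact Finset.mem_insert_of_mem (Finset.mem_filter.2 ⟨Finset.mem_univ j, hc⟩)
    · exact hc ▸ Finset.mem_insert_self _ _
  have h2 := Finset.card_insert_le j0 (Finset.univ.filter fun j => y j ≠ 0)
  omega

lemma one_le_hn {x : Fin n → F} (h : x ≠ 0) : 1 ≤ hammingNorm x :=
  Nat.one_le_iff_ne_zero.2 (hammingNorm_ne_zero_iff.2 h)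

end Weights


section Main

variable [DecidableEq F]

lemma main {t : ℕ} (htpos : 1 ≤ t) :
    ∀ s : ℕ, ∀ S : Finset (Fin n), S.card = s → S.Nonempty →
    ∀ C : Fin t → Submodule F (Fin n → F),
      (∀ i, C i ≤ zOut F S) →
      (∀ i, ∀ j ∈ S, ∃ c ∈ C i, c j ≠ 0) →
      ∃ c : Fin t → (Fin n → F), (∀ i, c i ∈ C i) ∧ 1 ≤ hammingNorm (∏ i, c i) ∧
        hammingNorm (∏ i, c i) ≤ max (t - 1) (S.card + t - ∑ i, finrank F ↥(C i)) := by
  intro s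
  induction s using Nat.strong_induction_on with
  | _ s IH =>
  intro S hcard hSne C hzo hfs
  classical
  -- basic facts
  have h1k : ∀ i, 1 ≤ finrank F ↥(C i) := by
    intro i
    obtain ⟨j, hj⟩ := hSne
    obtain ⟨c, hc, hc0⟩ := hfs i j hj
    by_contra h
    have h0 : finrank F ↥(C i) = 0 := by omega
    rw [Submodule.finrank_eq_zero] at h0
    rw [h0, Submodule.mem_bot] at hc
    exact hc0 (by rw [hc]; rfl)
  have hkt : t ≤ ∑ i, finrank F ↥(C i) := by
    calc t = ∑ _i : Fin t, 1 := by simp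
    _ ≤ _ := Finset.sum_le_sum (fun i _ => h1k i)
  rcases eq_or_lt_of_le htpos with ht1 | ht2
  · -- case t = 1 : Singleton bound
    subst ht1
    have hk0 : finrank F ↥(C 0) ≤ S.card := by
      apply finrank_le_card
      intro x hx h0
      funext j
      by_cases hj : j ∈ S
      · exact h0 j hj
      · exact hzo 0 hx j hj
    obtain ⟨A, hAS, hAcard⟩ := Finset.exists_subset_card_eq (s := S) (n := finrank F ↥(C 0) - 1) (by omega)
    have hW : 1 ≤ finrank F ↥(C 0 ⊓ zOn F A) := by
      have h10 := h1k 0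
      have := finrank_le_inf_zOn_add (C 0) A
      omega
    obtain ⟨w, hw, hw0⟩ := exists_mem_ne_zero _ hW
    obtain ⟨hwC, hwA⟩ := Submodule.mem_inf.1 hw
    have hsum : ∑ i, finrank F ↥(C i) = finrank F ↥(C 0) := by
      simp
    have hprod : (∏ i : Fin 1, (fun _ : Fin 1 => w) i) = w := by
      simp
    refine ⟨fun _ => w, fun i => by rw [show i = 0 from Subsingleton.elim i 0]; exact hwC, ?_, ?_⟩
    · rw [hprod]; exact one_le_hn hw0
    · rw [hprod]
      have hle : hammingNorm w ≤ (S \ A).card := by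
        apply hn_le_card
        intro j hj
        rw [Finset.mem_sdiff]
        constructor
        · by_contra hjS
          exact hj (hzo 0 hwC j hjS)
        · intro hjA
          exact hj (hwA j hjA)
      rw [Finset.card_sdiff_of_subset hAS] at hle
      refine le_trans hle (le_trans (by omega) (le_max_right _ _))
  · -- case t ≥ 2
    by_cases hcore : S.card + 1 ≤ ∑ i, finrank F ↥(C i)
    · -- CORE case: goal weight ≤ t - 1
      -- proportionality classes
      set Rl : Fin t → Fin n → Fin n → Prop :=
        fun i j j' => ∃ l : F, l ≠ 0 ∧ ∀ c ∈ C i, c j' = l * c j with hRl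
      set Kl : Fin t → Fin n → Finset (Fin n) :=
        fun i j => S.filter (Rl i j) with hKl
      have hrefl : ∀ i j, Rl i j j := fun i j => ⟨1, one_ne_zero, fun c _ => (one_mul _).symm⟩
      have hmemKl : ∀ i j, j ∈ S → j ∈ Kl i j :=
        fun i j hj => Finset.mem_filter.2 ⟨hj, hrefl i j⟩
      have hKlsub : ∀ i j, Kl i j ⊆ S := fun i j => Finset.filter_subset _ _
      have hsymm : ∀ i (j j' : Fin n), Rl i j j' → Rl i j' j := by
        rintro i j j' ⟨l, hl, h⟩
        refine ⟨l⁻¹, inv_ne_zero hl, fun c hc => ?_⟩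
        rw [h c hc]
        field_simp
      have htrans : ∀ i (j j' j'' : Fin n), Rl i j j' → Rl i j' j'' → Rl i j j'' := by
        rintro i j j' j'' ⟨l, hl, h⟩ ⟨m, hm, h'⟩
        refine ⟨m * l, mul_ne_zero hm hl, fun c hc => ?_⟩
        rw [h' c hc, h c hc, mul_assoc]
      have hKleq : ∀ i (j j' : Fin n), Rl i j j' → Kl i j = Kl i j' := by
        intro i j j' hjj'
        ext a
        simp only [hKl, Finset.mem_filter, and_congr_right_iff]
        intro _
        constructor
        · exact fun h => htrans i j' j a (hsymm i j j' hjj') h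
        · exact fun h => htrans i j j' a hjj' h
      by_cases hbig : ∀ i, ∀ j ∈ S, t ≤ (Kl i j).card
      · -- impossible: pigeonhole
        exfalso
        have hik : ∀ i, t * finrank F ↥(C i) ≤ S.card := by
          intro i
          set rep : Fin n → Fin n :=
            fun j => if h : (Kl i j).Nonempty then (Kl i j).min' h else j with hrep
          have hrepKl : ∀ j ∈ S, rep j ∈ Kl i j := by
            intro j hj
            have hne : (Kl i j).Nonempty := ⟨j, hmemKl i j hj⟩
            simp only [hrep, dif_pos hne]
            exact Finset.min'_mem _ _
          set R : Finset (Fin n) := S.image rep with hR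
          have hkR : finrank F ↥(C i) ≤ R.card := by
            apply finrank_le_card
            intro x hx h0
            funext j
            by_cases hj : j ∈ S
            · have h1 : rep j ∈ Kl i j := hrepKl j hj
              have h2 : Rl i j (rep j) := (Finset.mem_filter.1 h1).2
              obtain ⟨l, hl, h3⟩ := h2
              have h4 : x (rep j) = 0 := h0 _ (Finset.mem_image_of_mem rep hj)
              have h5 := h3 x hx
              rw [h4] at h5
              exact (mul_eq_zero.1 h5.symm).resolve_left hl
            · exact hzo i hx j hj
          have htR : t * R.card ≤ S.card := by
            have hfib := Finset.card_eq_sum_card_fiberwise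
              (f := rep) (s := S) (t := R) (fun j hj => Finset.mem_image_of_mem rep hj)
            have hge : ∀ r ∈ R, t ≤ (S.filter fun j => rep j = r).card := by
              intro r hr
              obtain ⟨j1, hj1S, hj1⟩ := Finset.mem_image.1 hr
              have hsub : Kl i j1 ⊆ S.filter (fun j => rep j = r) := by
                intro a ha
                have haS : a ∈ S := hKlsub i j1 ha
                have hra : Rl i j1 a := (Finset.mem_filter.1 ha).2
                have heq : Kl i a = Kl i j1 := (hKleq i j1 a hra).symm
                have hrepa : rep a = rep j1 := by
                  have hne_a : (Kl i a).Nonempty := ⟨a, hmemKl i a haS⟩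
                  have hne_j : (Kl i j1).Nonempty := ⟨j1, hmemKl i j1 hj1S⟩
                  simp only [hrep, dif_pos hne_a, dif_pos hne_j]
                  congr 1
                rw [Finset.mem_filter]
                exact ⟨haS, by rw [hrepa, hj1]⟩
              calc t ≤ (Kl i j1).card := hbig i j1 hj1S
                _ ≤ _ := Finset.card_le_card hsub
            have hsumge : R.card * t ≤ ∑ r ∈ R, (S.filter fun j => rep j = r).card := by
              have := Finset.card_nsmul_le_sum R (fun r => (S.filter fun j => rep j = r).card) t hge
              simpa [smul_eq_mul] using this
            calc t * R.card = R.card * t := Nat.mul_comm _ _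
              _ ≤ _ := hsumge
              _ = S.card := hfib.symm
          exact le_trans (Nat.mul_le_mul_left t hkR) htR
        have hmul : t * ∑ i, finrank F ↥(C i) ≤ t * S.card := by
          calc t * ∑ i, finrank F ↥(C i) = ∑ i, t * finrank F ↥(C i) := Finset.mul_sum _ _ _
          _ ≤ ∑ _i : Fin t, S.card := Finset.sum_le_sum (fun i _ => hik i)
          _ = t * S.card := by simp [Finset.sum_const, Finset.card_univ, smul_eq_mul]
        have := Nat.le_of_mul_le_mul_left hmul (by omega : 0 < t)
        omega
      · push_neg at hbig
        obtain ⟨i0, j0, hj0S, hKc⟩ := hbig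
        set K : Finset (Fin n) := Kl i0 j0 with hK
        have hj0K : j0 ∈ K := hmemKl i0 j0 hj0S
        have hKS : K ⊆ S := hKlsub i0 j0
        have hK1 : 1 ≤ K.card := Finset.card_pos.2 ⟨j0, hj0K⟩
        have hKcS : K.card ≤ S.card := Finset.card_le_card hKS
        by_cases h3b : ∃ i1, ∃ w ∈ C i1, w ≠ 0 ∧ ∀ j, j ∉ K → w j = 0
        · -- a code has a word supported inside the small class K
          obtain ⟨i1, w, hwC, hw0, hwK⟩ := h3b
          obtain ⟨j1, hj1⟩ := Function.ne_iff.1 hw0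
          have hwj1 : w j1 ≠ 0 := by simpa using hj1
          have hj1K : j1 ∈ K := by
            by_contra h
            exact hwj1 (hwK j1 h)
          have hj1S : j1 ∈ S := hKS hj1K
          have hsel : ∀ i : Fin t, ∃ x, x ∈ C i ∧ x j1 ≠ 0 := by
            intro i
            obtain ⟨c, hc, hc0⟩ := hfs i j1 hj1S
            exact ⟨c, hc, hc0⟩
          choose g hg1 hg2 using hsel
          refine ⟨fun i => if i = i1 then w else g i, ?_, ?_, ?_⟩
          · intro i
            by_cases h : i = i1
            · subst h; simpa using hwC
            · simpa [h] using hg1 i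
          · apply one_le_hn
            intro hP
            have hPj1 : (∏ i, (fun i => if i = i1 then w else g i) i) j1 = 0 := by
              rw [hP]; rfl
            rw [Finset.prod_apply] at hPj1
            have : ∀ i ∈ Finset.univ, (if i = i1 then w else g i) j1 ≠ 0 := by
              intro i _
              by_cases h : i = i1
              · rw [if_pos h]; exact hwj1
              · rw [if_neg h]; exact hg2 i
            exact Finset.prod_ne_zero_iff.2 this hPj1
          · have hsupp : ∀ j, (∏ i, (fun i => if i = i1 then w else g i) i) j ≠ 0 → j ∈ K := by
              intro j hj
              by_contra hjK
              apply hj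
              rw [Finset.prod_apply]
              exact Finset.prod_eq_zero (Finset.mem_univ i1)
                (by simpa using hwK j hjK)
            calc hammingNorm _ ≤ K.card := hn_le_card hsupp
              _ ≤ t - 1 := by omega
              _ ≤ _ := le_max_left _ _
        · -- no code has a word supported in K: shorten C i0 at j0 and puncture K
          push_neg at h3b
          have hkill : ∀ i, ∀ x ∈ C i, (∀ j, j ∉ K → x j = 0) → x = 0 := by
            intro i x hx hvan
            by_contra h
            obtain ⟨j, hjK, hj0⟩ := h3b i x hx h
            exact hj0 (hvan j hjK)
          set S' : Finset (Fin n) := S \ K with hS'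
          have hS'ne : S'.Nonempty := by
            rw [Finset.nonempty_iff_ne_empty]
            intro h
            have hsub : S ⊆ K := Finset.sdiff_eq_empty_iff_subset.1 h
            obtain ⟨c, hc, hc0⟩ := hfs i0 j0 hj0S
            apply hc0
            have hc00 : c = 0 := hkill i0 c hc
              (fun j hj => hzo i0 hc j (fun hjS => hj (hsub hjS)))
            rw [hc00]; rfl
          have hS'card : S'.card = S.card - K.card := Finset.card_sdiff_of_subset hKS
          set D : Fin t → Submodule F (Fin n → F) := fun i =>
            if i = i0 then
              Submodule.map (res F S') (C i0 ⊓ LinearMap.ker (LinearMap.proj j0))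
            else Submodule.map (res F S') (C i) with hD
          have hDi0 : D i0 = Submodule.map (res F S')
              (C i0 ⊓ LinearMap.ker (LinearMap.proj j0)) := if_pos rfl
          have hDi : ∀ i, i ≠ i0 → D i = Submodule.map (res F S') (C i) :=
            fun i hi => if_neg hi
          have hDzo : ∀ i, D i ≤ zOut F S' := by
            intro i
            by_cases h : i = i0
            · rw [h, hDi0]; exact map_res_le_zOut _ _
            · rw [hDi i h]; exact map_res_le_zOut _ _
          have hDfs : ∀ i, ∀ j ∈ S', ∃ d ∈ D i, d j ≠ 0 := by
            intro i j hj
            have hjS : j ∈ S := (Finset.mem_sdiff.1 hj).1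
            have hjK : j ∉ K := (Finset.mem_sdiff.1 hj).2
            by_cases h : i = i0
            · subst h
              by_cases hex : ∃ x ∈ C i, x j0 = 0 ∧ x j ≠ 0
              · obtain ⟨x, hx, hx0, hxj⟩ := hex
                refine ⟨res F S' x, ?_, ?_⟩
                · rw [hDi0]
                  exact Submodule.mem_map_of_mem
                    (Submodule.mem_inf.2 ⟨hx, by
                      rw [LinearMap.mem_ker, LinearMap.proj_apply]; exact hx0⟩)
                · rw [res_apply, if_pos hj]; exact hxj
              · exfalso
                push_neg at hex
                obtain ⟨cs, hcs, hcs0⟩ := hfs i j0 hj0S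
                have hall : ∀ c ∈ C i, c j = (cs j * (cs j0)⁻¹) * c j0 := by
                  intro c hc
                  have hy : c - (c j0 * (cs j0)⁻¹) • cs ∈ C i :=
                    Submodule.sub_mem _ hc (Submodule.smul_mem _ _ hcs)
                  have hyj0 : (c - (c j0 * (cs j0)⁻¹) • cs) j0 = 0 := by
                    simp only [Pi.sub_apply, Pi.smul_apply, smul_eq_mul]
                    rw [mul_assoc, inv_mul_cancel₀ hcs0, mul_one, sub_self]
                  have hyj := hex _ hy hyj0
                  simp only [Pi.sub_apply, Pi.smul_apply, smul_eq_mul] at hyj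
                  have h6 := sub_eq_zero.1 hyj
                  rw [h6]; ring
                have hlne : (cs j * (cs j0)⁻¹) ≠ 0 := by
                  obtain ⟨ch, hch, hch0⟩ := hfs i j hjS
                  intro h0
                  exact hch0 (by rw [hall ch hch, h0, zero_mul])
                exact hjK (Finset.mem_filter.2 ⟨hjS, ⟨cs j * (cs j0)⁻¹, hlne, hall⟩⟩)
            · obtain ⟨c, hc, hc0⟩ := hfs i j hjS
              refine ⟨res F S' c, ?_, ?_⟩
              · rw [hDi i h]
                exact Submodule.mem_map_of_mem hc
              · rw [res_apply, if_pos hj]; exact hc0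
          have hres0 : ∀ i, ∀ x ∈ C i, res F S' x = 0 → x = 0 := by
            intro i x hx h0
            apply hkill i x hx
            intro j hjK
            by_cases hjS' : j ∈ S'
            · have := congrFun h0 j
              rw [res_apply, if_pos hjS'] at this
              exact this
            · have hjS : j ∉ S := fun hjS => hjS' (Finset.mem_sdiff.2 ⟨hjS, hjK⟩)
              exact hzo i hx j hjS
          have hDrank : ∀ i, i ≠ i0 → finrank F ↥(D i) = finrank F ↥(C i) := by
            intro i hi
            rw [hDi i hi]
            exact finrank_map_eq_of_inj _ _ (hres0 i)
          have hDrank0 : finrank F ↥(D i0) + 1 = finrank F ↥(C i0) := by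
            rw [hDi0]
            rw [finrank_map_eq_of_inj _ _
              (fun x hx h0 => hres0 i0 x (Submodule.mem_inf.1 hx).1 h0)]
            apply finrank_inf_ker_add_one
            obtain ⟨c, hc, hc0⟩ := hfs i0 j0 hj0S
            exact ⟨c, hc, by rw [LinearMap.proj_apply]; exact hc0⟩
          have hDsum : ∑ i, finrank F ↥(D i) + 1 = ∑ i, finrank F ↥(C i) := by
            have h1 : finrank F ↥(D i0) + ∑ i ∈ Finset.univ.erase i0, finrank F ↥(D i)
                = ∑ i, finrank F ↥(D i) :=
              Finset.add_sum_erase Finset.univ (fun i => finrank F ↥(D i)) (Finset.mem_univ i0)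
            have h2 : finrank F ↥(C i0) + ∑ i ∈ Finset.univ.erase i0, finrank F ↥(C i)
                = ∑ i, finrank F ↥(C i) :=
              Finset.add_sum_erase Finset.univ (fun i => finrank F ↥(C i)) (Finset.mem_univ i0)
            have h3 : ∑ i ∈ Finset.univ.erase i0, finrank F ↥(D i)
                = ∑ i ∈ Finset.univ.erase i0, finrank F ↥(C i) :=
              Finset.sum_congr rfl (fun i hi => hDrank i (Finset.ne_of_mem_erase hi))
            omega
          obtain ⟨c', hc'mem, hc'1, hc'2⟩ := IH S'.card (by omega) S' rfl hS'ne D hDzo hDfs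
          have hc'bound : hammingNorm (∏ i, c' i) ≤ t - 1 := by
            refine le_trans hc'2 (max_le le_rfl ?_)
            omega
          -- lift
          have hlift : ∀ i, ∃ x, x ∈ C i ∧ res F S' x = c' i ∧
              (i = i0 → ∀ j ∈ K, x j = 0) := by
            intro i
            by_cases h : i = i0
            · subst h
              have hm := hc'mem i
              rw [hDi0] at hm
              obtain ⟨x, hx, hxeq⟩ := hm
              obtain ⟨hxC, hxk⟩ := Submodule.mem_inf.1 hx
              rw [LinearMap.mem_ker, LinearMap.proj_apply] at hxk
              refine ⟨x, hxC, hxeq, fun _ j hjK => ?_⟩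
              obtain ⟨l, hl, hrel⟩ := (Finset.mem_filter.1 hjK).2
              rw [hrel x hxC, hxk, mul_zero]
            · have hm := hc'mem i
              rw [hDi i h] at hm
              obtain ⟨x, hx, hxeq⟩ := hm
              exact ⟨x, hx, hxeq, fun h' => absurd h' h⟩
          choose x hxC hxres hxK using hlift
          have hPP : (∏ i, x i) = (∏ i, c' i) := by
            funext j
            rw [Finset.prod_apply, Finset.prod_apply]
            by_cases hj : j ∈ S'
            · apply Finset.prod_congr rfl
              intro i _
              have h7 := congrFun (hxres i) j
              rw [res_apply, if_pos hj] at h7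
              exact h7
            · have hz1 : x i0 j = 0 := by
                by_cases hjK : j ∈ K
                · exact hxK i0 rfl j hjK
                · have hjS : j ∉ S := fun hjS => hj (Finset.mem_sdiff.2 ⟨hjS, hjK⟩)
                  exact hzo i0 (hxC i0) j hjS
              have hz2 : c' i0 j = 0 := by
                rw [← hxres i0, res_apply, if_neg hj]
              rw [Finset.prod_eq_zero (Finset.mem_univ i0) hz1,
                Finset.prod_eq_zero (Finset.mem_univ i0) hz2]
          refine ⟨x, hxC, ?_, ?_⟩
          · rw [hPP]; exact hc'1
          · rw [hPP]; exact le_trans hc'bound (le_max_left _ _)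
    · -- NONCORE case: ∑ k ≤ S.card
      have hncore : ∑ i, finrank F ↥(C i) ≤ S.card := by omega
      obtain ⟨j0, hj0S⟩ := hSne
      by_cases hA : ∃ i1, ∃ w ∈ C i1, w ≠ 0 ∧ ∀ j, j ≠ j0 → w j = 0
      · -- weight-one codeword
        obtain ⟨i1, w, hwC, hw0, hwj⟩ := hA
        have hsel : ∀ i : Fin t, ∃ y, y ∈ C i ∧ y j0 ≠ 0 := by
          intro i
          obtain ⟨c, hc, hc0⟩ := hfs i j0 hj0S
          exact ⟨c, hc, hc0⟩
        choose g hg1 hg2 using hsel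
        have hwj0 : w j0 ≠ 0 := by
          intro h
          apply hw0
          funext j
          by_cases hj : j = j0
          · rw [hj, h]; rfl
          · rw [hwj j hj]; rfl
        refine ⟨fun i => if i = i1 then w else g i, ?_, ?_, ?_⟩
        · intro i
          by_cases h : i = i1
          · subst h; simpa using hwC
          · simpa [h] using hg1 i
        · apply one_le_hn
          intro hP
          have hPj0 : (∏ i, (fun i => if i = i1 then w else g i) i) j0 = 0 := by
            rw [hP]; rfl
          rw [Finset.prod_apply] at hPj0
          have : ∀ i ∈ Finset.univ, (if i = i1 then w else g i) j0 ≠ 0 := by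
            intro i _
            by_cases h : i = i1
            · rw [if_pos h]; exact hwj0
            · rw [if_neg h]; exact hg2 i
          exact Finset.prod_ne_zero_iff.2 this hPj0
        · have hsupp : ∀ j, (∏ i, (fun i => if i = i1 then w else g i) i) j ≠ 0 → j ∈ ({j0} : Finset (Fin n)) := by
            intro j hj
            rw [Finset.mem_singleton]
            by_contra hjne
            apply hj
            rw [Finset.prod_apply]
            exact Finset.prod_eq_zero (Finset.mem_univ i1)
              (by simpa using hwj j hjne)
          calc hammingNorm _ ≤ ({j0} : Finset (Fin n)).card := hn_le_card hsupp
            _ = 1 := Finset.card_singleton _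
            _ ≤ t - 1 := by omega
            _ ≤ _ := le_max_left _ _
      · -- puncture at j0
        push_neg at hA
        have hkill : ∀ i, ∀ x ∈ C i, (∀ j, j ≠ j0 → x j = 0) → x = 0 := by
          intro i x hx hvan
          by_contra h
          obtain ⟨j, hj, hj0'⟩ := hA i x hx h
          exact hj0' (hvan j hj)
        set S' : Finset (Fin n) := S.erase j0 with hS'
        have hS'card : S'.card = S.card - 1 := Finset.card_erase_of_mem hj0S
        have hScard2 : 2 ≤ S.card := le_trans (le_trans ht2 hkt) hncore
        have hS'ne : S'.Nonempty := by
          rw [← Finset.card_pos]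
          omega
        set D : Fin t → Submodule F (Fin n → F) := fun i =>
          Submodule.map (res F S') (C i) with hD
        have hDzo : ∀ i, D i ≤ zOut F S' := fun i => map_res_le_zOut _ _
        have hDfs : ∀ i, ∀ j ∈ S', ∃ d ∈ D i, d j ≠ 0 := by
          intro i j hj
          have hjS : j ∈ S := Finset.mem_of_mem_erase hj
          obtain ⟨c, hc, hc0⟩ := hfs i j hjS
          refine ⟨res F S' c, Submodule.mem_map_of_mem hc, ?_⟩
          rw [res_apply, if_pos hj]; exact hc0
        have hres0 : ∀ i, ∀ x ∈ C i, res F S' x = 0 → x = 0 := by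
          intro i x hx h0
          apply hkill i x hx
          intro j hj
          by_cases hjS' : j ∈ S'
          · have := congrFun h0 j
            rw [res_apply, if_pos hjS'] at this
            exact this
          · have hjS : j ∉ S := fun hjS => hjS' (Finset.mem_erase.2 ⟨hj, hjS⟩)
            exact hzo i hx j hjS
        have hDrank : ∀ i, finrank F ↥(D i) = finrank F ↥(C i) :=
          fun i => finrank_map_eq_of_inj _ _ (hres0 i)
        have hDsum : ∑ i, finrank F ↥(D i) = ∑ i, finrank F ↥(C i) :=
          Finset.sum_congr rfl (fun i _ => hDrank i)
        obtain ⟨c', hc'mem, hc'1, hc'2⟩ := IH S'.card (by omega) S' rfl hS'ne D hDzo hDfs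
        have hlift : ∀ i, ∃ x, x ∈ C i ∧ res F S' x = c' i := by
          intro i
          have hm := hc'mem i
          rw [hD] at hm
          obtain ⟨x, hx, hxeq⟩ := hm
          exact ⟨x, hx, hxeq⟩
        choose x hxC hxres using hlift
        have hidx : (0 : ℕ) < t := by omega
        set iz : Fin t := ⟨0, hidx⟩ with hiz
        have heqS' : ∀ j ∈ S', (∏ i, x i) j = (∏ i, c' i) j := by
          intro j hj
          rw [Finset.prod_apply, Finset.prod_apply]
          apply Finset.prod_congr rfl
          intro i _
          have h7 := congrFun (hxres i) j
          rw [res_apply, if_pos hj] at h7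
          exact h7
        have hc'z : ∀ j, j ∉ S' → (∏ i, c' i) j = 0 := by
          intro j hj
          rw [Finset.prod_apply]
          refine Finset.prod_eq_zero (Finset.mem_univ iz) ?_
          have := hDzo iz (hc'mem iz)
          exact this j hj
        have hxz : ∀ j, j ∉ S → (∏ i, x i) j = 0 := by
          intro j hj
          rw [Finset.prod_apply]
          exact Finset.prod_eq_zero (Finset.mem_univ iz) (hzo iz (hxC iz) j hj)
        have h1 : hammingNorm (∏ i, c' i) ≤ hammingNorm (∏ i, x i) := by
          apply hn_mono
          intro j hj
          have hjS' : j ∈ S' := by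
            by_contra h
            exact hj (hc'z j h)
          rw [heqS' j hjS']
          exact hj
        have h2 : hammingNorm (∏ i, x i) ≤ hammingNorm (∏ i, c' i) + 1 := by
          apply hn_le_insert j0
          intro j hj
          by_cases hjj0 : j = j0
          · exact Or.inr hjj0
          · left
            have hjS' : j ∈ S' := by
              by_contra h
              have hjS : j ∉ S := fun hjS => h (Finset.mem_erase.2 ⟨hjj0, hjS⟩)
              exact hj (hxz j hjS)
            rw [← heqS' j hjS']
            exact hj
        refine ⟨x, hxC, by omega, ?_⟩
        rw [hDsum] at hc'2
        have hb : max (t - 1) (S'.card + t - ∑ i, finrank F ↥(C i)) + 1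
            ≤ S.card + t - ∑ i, finrank F ↥(C i) := by
          rcases max_choice (t - 1) (S'.card + t - ∑ i, finrank F ↥(C i)) with h | h <;>
            rw [h] <;> omega
        refine le_trans (by omega : hammingNorm (∏ i, x i)
          ≤ max (t - 1) (S'.card + t - ∑ i, finrank F ↥(C i)) + 1)
          (le_trans hb (le_max_right _ _))

end Main

end PSB

theorem stmt4 {F : Type*} [Field F] [Fintype F] [DecidableEq F] {n t : ℕ}
    (ht : 1 ≤ t) (C : Fin t → Submodule F (Fin n → F))
    (hfs : ∀ i, fullSupport F (C i))
    (hne : prodFamily F C ≠ ⊥) :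
    ∃ c : Fin t → (Fin n → F), (∀ i, c i ∈ C i) ∧
      1 ≤ hammingNorm (∏ i, c i) ∧
      hammingNorm (∏ i, c i) ≤ max (t - 1) (n + t - ∑ i, Module.finrank F (C i)) := by
  classical
  rcases Nat.eq_zero_or_pos n with hn | hn
  · exfalso
    apply hne
    subst hn
    rw [Submodule.eq_bot_iff]
    intro x _
    funext j
    exact j.elim0
  · haveI : Nonempty (Fin n) := ⟨⟨0, hn⟩⟩
    have hSne : (Finset.univ : Finset (Fin n)).Nonempty := Finset.univ_nonempty
    have hzo : ∀ i, C i ≤ PSB.zOut F Finset.univ := by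
      intro i x _ j hj
      exact absurd (Finset.mem_univ j) hj
    have hfs' : ∀ i, ∀ j ∈ (Finset.univ : Finset (Fin n)), ∃ c ∈ C i, c j ≠ 0 :=
      fun i j _ => hfs i j
    obtain ⟨c, hc1, hc2, hc3⟩ :=
      PSB.main ht Finset.univ.card Finset.univ rfl hSne C hzo hfs'
    refine ⟨c, hc1, hc2, ?_⟩
    rwa [Finset.card_univ, Fintype.card_fin] at hc3

end
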